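/- Let A_1, A_2, A_3, A_4 be real matrices with N columns, and define the polyhedral cones P_1 = {v ∈ ℝ^N : A_1 v ≥ 0, A_2 v ≥ 0, A_3 v ≥ 0} and P_2 = {v ∈ ℝ^N : A_1 v ≥ 0, A_2 v ≤ 0, A_4 v ≥ 0}. If the set S = {v ∈ ℝ^N : A_1 v = 0, A_2 v > 0, A_3 v > 0, A_4 v < 0} is non-empty, then the Minkowski sum P_1 + P_2 equals {v ∈ ℝ^N : A_1 v ≥ 0}. -/
import Mathlib


open Pointwise Matrix

/-!
Statement 11: with P₁ = {v : A₁v ≥ 0, A₂v ≥ 0, A₃v ≥ 0} and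
P₂ = {v : A₁v ≥ 0, A₂v ≤ 0, A₄v ≥ 0}, if there is a point v with
A₁v = 0, A₂v > 0, A₃v > 0, A₄v < 0 (entrywise), then
P₁ + P₂ = {v : A₁v ≥ 0}.
-/
theorem statement11 (N m₁ m₂ m₃ m₄ : ℕ)
    (A₁ : Matrix (Fin m₁) (Fin N) ℝ) (A₂ : Matrix (Fin m₂) (Fin N) ℝ)
    (A₃ : Matrix (Fin m₃) (Fin N) ℝ) (A₄ : Matrix (Fin m₄) (Fin N) ℝ)
    (hS : ∃ v : Fin N → ℝ,
      (∀ i, A₁.mulVec v i = 0) ∧ (∀ i, 0 < A₂.mulVec v i) ∧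
      (∀ i, 0 < A₃.mulVec v i) ∧ (∀ i, A₄.mulVec v i < 0)) :
    {v : Fin N → ℝ | (∀ i, 0 ≤ A₁.mulVec v i) ∧ (∀ i, 0 ≤ A₂.mulVec v i) ∧
        (∀ i, 0 ≤ A₃.mulVec v i)} +
      {v : Fin N → ℝ | (∀ i, 0 ≤ A₁.mulVec v i) ∧ (∀ i, A₂.mulVec v i ≤ 0) ∧
        (∀ i, 0 ≤ A₄.mulVec v i)} =
      {v : Fin N → ℝ | ∀ i, 0 ≤ A₁.mulVec v i} := by
  obtain ⟨w, hw1, hw2, hw3, hw4⟩ := hS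
  apply Set.Subset.antisymm
  · rintro x ⟨a, ⟨ha1, -, -⟩, b, ⟨hb1, -, -⟩, rfl⟩
    intro i
    rw [Matrix.mulVec_add, Pi.add_apply]
    exact add_nonneg (ha1 i) (hb1 i)
  · intro v hv
    obtain ⟨M₂, hM₂⟩ := Finite.exists_le
      (fun i => -(A₂.mulVec v i) / (A₂.mulVec w i))
    obtain ⟨M₃, hM₃⟩ := Finite.exists_le
      (fun i => -(A₃.mulVec v i) / (A₃.mulVec w i))
    set t : ℝ := max 0 (max M₂ M₃) with ht
    have ht0 : 0 ≤ t := le_max_left _ _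
    have ht2 : M₂ ≤ t := le_trans (le_max_left _ _) (le_max_right _ _)
    have ht3 : M₃ ≤ t := le_trans (le_max_right _ _) (le_max_right _ _)
    refine ⟨v + t • w, ⟨?_, ?_, ?_⟩, -(t • w), ⟨?_, ?_, ?_⟩, by module⟩
    · intro i
      rw [Matrix.mulVec_add, Matrix.mulVec_smul, Pi.add_apply, Pi.smul_apply,
        hw1 i, smul_zero, add_zero]
      exact hv i
    · intro i
      rw [Matrix.mulVec_add, Matrix.mulVec_smul, Pi.add_apply, Pi.smul_apply]
      have : -(A₂.mulVec v i) ≤ t * A₂.mulVec w i := by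
        calc -(A₂.mulVec v i) = (-(A₂.mulVec v i) / (A₂.mulVec w i)) * A₂.mulVec w i :=
              (div_mul_cancel₀ _ (hw2 i).ne').symm
          _ ≤ t * A₂.mulVec w i := by
              apply mul_le_mul_of_nonneg_right (le_trans (hM₂ i) ht2) (hw2 i).le
      simp only [smul_eq_mul]; linarith
    · intro i
      rw [Matrix.mulVec_add, Matrix.mulVec_smul, Pi.add_apply, Pi.smul_apply]
      have : -(A₃.mulVec v i) ≤ t * A₃.mulVec w i := by
        calc -(A₃.mulVec v i) = (-(A₃.mulVec v i) / (A₃.mulVec w i)) * A₃.mulVec w i :=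
              (div_mul_cancel₀ _ (hw3 i).ne').symm
          _ ≤ t * A₃.mulVec w i := by
              apply mul_le_mul_of_nonneg_right (le_trans (hM₃ i) ht3) (hw3 i).le
      simp only [smul_eq_mul]; linarith
    · intro i
      rw [Matrix.mulVec_neg, Matrix.mulVec_smul, Pi.neg_apply, Pi.smul_apply, hw1 i,
        smul_zero, neg_zero]
    · intro i
      rw [Matrix.mulVec_neg, Matrix.mulVec_smul, Pi.neg_apply, Pi.smul_apply]
      simp only [smul_eq_mul]
      nlinarith [hw2 i]
    · intro i
      rw [Matrix.mulVec_neg, Matrix.mulVec_smul, Pi.neg_apply, Pi.smul_apply]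
      simp only [smul_eq_mul]
      nlinarith [hw4 i]
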